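/- Kernels in the category of mixed Hodge structures: let f : (V, W, F) → (V', W', F') be a morphism of mixed Hodge structures and let K := ker f ⊆ V. Then the induced filtrations W^K_n := W_n ∩ K on K and F^p_K := F^p ∩ (K)_ℂ on K_ℂ (identifying K_ℂ with ker(f_ℂ) ⊆ V_ℂ) define a mixed Hodge structure on K. -/

import Mathlib

open scoped TensorProduct

private lemma sigmaC_aux (V : Type*) [AddCommGroup V] [Module ℝ V] (c : ℂ) (x : ℂ ⊗[ℝ] V) :
    TensorProduct.map Complex.conjAe.toLinearMap LinearMap.id (c • x) =
      (starRingEnd ℂ) c • TensorProduct.map Complex.conjAe.toLinearMap LinearMap.id x := by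
  induction x using TensorProduct.induction_on with
  | zero => simp
  | tmul z v => simp [TensorProduct.smul_tmul', smul_eq_mul, map_mul]
  | add x y hx hy => simp only [smul_add, map_add, hx, hy]

/-- The conjugation involution `σ` of the complexification `ℂ ⊗[ℝ] V`,
as a `conj`-semilinear map. -/
noncomputable def sigmaC (V : Type*) [AddCommGroup V] [Module ℝ V] :
    (ℂ ⊗[ℝ] V) →ₛₗ[starRingEnd ℂ] (ℂ ⊗[ℝ] V) where
  toFun := TensorProduct.map Complex.conjAe.toLinearMap LinearMap.id
  map_add' x y := map_add _ x y
  map_smul' c x := sigmaC_aux V c x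

/-- A mixed Hodge structure on a real vector space `V`: an increasing, bounded, exhaustive
weight filtration `W` of `V` by real subspaces and a decreasing, bounded, exhaustive Hodge
filtration `F` of `V_ℂ = ℂ ⊗[ℝ] V` by complex subspaces, such that for every `n` the
filtration induced by `F` on `Gr^W_n = W_n / W_{n-1}` is a Hodge filtration of weight `n`.

Identifying the complexification of `Gr^W_n` with `(W_n)_ℂ / (W_{n-1})_ℂ` (where
`(W_n)_ℂ := (W n).baseChange ℂ ⊆ V_ℂ`), the Hodge filtration condition of weight `n` on
`Gr^W_n` — namely `F^p(Gr^W_n)_ℂ ⊕ σ(F^{n-p+1}(Gr^W_n)_ℂ) = (Gr^W_n)_ℂ` for all `p`, where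
`F^p(Gr^W_n)_ℂ` is the image of `F^p ⊓ (W_n)_ℂ` — is expressed below by pulling back along
the quotient map `(W_n)_ℂ → (W_n)_ℂ / (W_{n-1})_ℂ`: the first displayed equation is the
disjointness of the two images in the quotient, the second their spanning of the quotient. -/
def IsMixedHodgeStructure (V : Type*) [AddCommGroup V] [Module ℝ V]
    (W : ℤ → Submodule ℝ V) (F : ℤ → Submodule ℂ (ℂ ⊗[ℝ] V)) : Prop :=
  Monotone W ∧
  (∃ a : ℤ, ∀ n ≤ a, W n = ⊥) ∧
  (∃ b : ℤ, ∀ n ≥ b, W n = ⊤) ∧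
  (∀ p : ℤ, F (p + 1) ≤ F p) ∧
  (∃ a : ℤ, ∀ p ≤ a, F p = ⊤) ∧
  (∃ b : ℤ, ∀ p ≥ b, F p = ⊥) ∧
  (∀ n p : ℤ,
    ((F p ⊓ (W n).baseChange ℂ) ⊔ (W (n - 1)).baseChange ℂ) ⊓
        (((F (n - p + 1) ⊓ (W n).baseChange ℂ).map (sigmaC V)) ⊔ (W (n - 1)).baseChange ℂ)
      = (W (n - 1)).baseChange ℂ ∧
    (F p ⊓ (W n).baseChange ℂ) ⊔ ((F (n - p + 1) ⊓ (W n).baseChange ℂ).map (sigmaC V))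
        ⊔ (W (n - 1)).baseChange ℂ
      = (W n).baseChange ℂ)

section Plumbing

variable {V V' : Type*} [AddCommGroup V] [Module ℝ V] [AddCommGroup V'] [Module ℝ V']

@[simp] lemma sigmaC_tmul (z : ℂ) (v : V) : sigmaC V (z ⊗ₜ[ℝ] v) = (starRingEnd ℂ) z ⊗ₜ[ℝ] v := rfl

/-- real part extraction -/
noncomputable def reT (V : Type*) [AddCommGroup V] [Module ℝ V] : (ℂ ⊗[ℝ] V) →ₗ[ℝ] V :=
  TensorProduct.lift ((LinearMap.lsmul ℝ V).comp Complex.reLm)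

noncomputable def imT (V : Type*) [AddCommGroup V] [Module ℝ V] : (ℂ ⊗[ℝ] V) →ₗ[ℝ] V :=
  TensorProduct.lift ((LinearMap.lsmul ℝ V).comp Complex.imLm)

@[simp] lemma reT_tmul (z : ℂ) (v : V) : reT V (z ⊗ₜ[ℝ] v) = z.re • v := rfl
@[simp] lemma imT_tmul (z : ℂ) (v : V) : imT V (z ⊗ₜ[ℝ] v) = z.im • v := rfl

lemma repr_eq (x : ℂ ⊗[ℝ] V) :
    x = 1 ⊗ₜ[ℝ] (reT V x) + Complex.I ⊗ₜ[ℝ] (imT V x) := by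
  induction x using TensorProduct.induction_on with
  | zero => simp
  | tmul z v =>
    rw [reT_tmul, imT_tmul, ← TensorProduct.smul_tmul, ← TensorProduct.smul_tmul,
      ← TensorProduct.add_tmul]
    congr 1
    simp [Complex.real_smul]
  | add x y hx hy =>
    rw [map_add, map_add, TensorProduct.tmul_add, TensorProduct.tmul_add]
    conv_lhs => rw [hx, hy]
    abel

lemma repr_unique {a b : V} (h : 1 ⊗ₜ[ℝ] a + Complex.I ⊗ₜ[ℝ] b = 0) : a = 0 ∧ b = 0 := by
  have ha := congrArg (reT V) h
  have hb := congrArg (imT V) h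
  simp at ha hb
  exact ⟨ha, hb⟩

lemma mem_baseChange_iff {p : Submodule ℝ V} {x : ℂ ⊗[ℝ] V} :
    x ∈ p.baseChange ℂ ↔ reT V x ∈ p ∧ imT V x ∈ p := by
  constructor
  · intro hx
    rw [Submodule.baseChange_eq_span] at hx
    refine Submodule.span_induction ?_ ?_ ?_ ?_ hx
    · rintro y ⟨m, hm, rfl⟩
      simp only [TensorProduct.mk_apply, reT_tmul, imT_tmul, Complex.one_re, Complex.one_im,
        one_smul, zero_smul]
      exact ⟨hm, p.zero_mem⟩
    · simp
    · intro y z _ _ hy hz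
      rw [map_add, map_add]
      exact ⟨p.add_mem hy.1 hz.1, p.add_mem hy.2 hz.2⟩
    · intro c y _ hy
      constructor
      · have : c • y = c ⊗ₜ[ℝ] (reT V y) + (c * Complex.I) ⊗ₜ[ℝ] (imT V y) := by
          conv_lhs => rw [repr_eq y]
          rw [smul_add, TensorProduct.smul_tmul', TensorProduct.smul_tmul']
          simp [smul_eq_mul]
        rw [this, map_add, reT_tmul, reT_tmul]
        exact p.add_mem (p.smul_mem _ hy.1) (p.smul_mem _ hy.2)
      · have : c • y = c ⊗ₜ[ℝ] (reT V y) + (c * Complex.I) ⊗ₜ[ℝ] (imT V y) := by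
          conv_lhs => rw [repr_eq y]
          rw [smul_add, TensorProduct.smul_tmul', TensorProduct.smul_tmul']
          simp [smul_eq_mul]
        rw [this, map_add, imT_tmul, imT_tmul]
        exact p.add_mem (p.smul_mem _ hy.1) (p.smul_mem _ hy.2)
  · rintro ⟨h1, h2⟩
    rw [repr_eq x]
    exact Submodule.add_mem _ (Submodule.tmul_mem_baseChange_of_mem _ h1)
      (Submodule.tmul_mem_baseChange_of_mem _ h2)

lemma baseChange_inf (p q : Submodule ℝ V) :
    (p ⊓ q).baseChange ℂ = p.baseChange ℂ ⊓ q.baseChange ℂ := by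
  ext x
  simp only [mem_baseChange_iff, Submodule.mem_inf]
  tauto

lemma baseChange_mono {p q : Submodule ℝ V} (h : p ≤ q) : p.baseChange ℂ ≤ q.baseChange ℂ := by
  intro x hx
  rw [mem_baseChange_iff] at hx ⊢
  exact ⟨h hx.1, h hx.2⟩

lemma reT_baseChange (f : V →ₗ[ℝ] V') (x : ℂ ⊗[ℝ] V) :
    reT V' (f.baseChange ℂ x) = f (reT V x) := by
  induction x using TensorProduct.induction_on with
  | zero => simp
  | tmul z v => simp
  | add x y hx hy => simp [hx, hy]

lemma imT_baseChange (f : V →ₗ[ℝ] V') (x : ℂ ⊗[ℝ] V) :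
    imT V' (f.baseChange ℂ x) = f (imT V x) := by
  induction x using TensorProduct.induction_on with
  | zero => simp
  | tmul z v => simp
  | add x y hx hy => simp [hx, hy]

lemma ker_baseChange (f : V →ₗ[ℝ] V') :
    LinearMap.ker (f.baseChange ℂ) = (LinearMap.ker f).baseChange ℂ := by
  ext x
  rw [LinearMap.mem_ker, mem_baseChange_iff]
  constructor
  · intro h
    constructor
    · rw [LinearMap.mem_ker, ← reT_baseChange, h, map_zero]
    · rw [LinearMap.mem_ker, ← imT_baseChange, h, map_zero]
  · rintro ⟨h1, h2⟩
    rw [repr_eq x, map_add, LinearMap.baseChange_tmul, LinearMap.baseChange_tmul,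
      LinearMap.mem_ker.mp h1, LinearMap.mem_ker.mp h2]
    simp

lemma baseChange_map (f : V →ₗ[ℝ] V') (p : Submodule ℝ V) :
    (p.map f).baseChange ℂ = (p.baseChange ℂ).map (f.baseChange ℂ) := by
  ext x
  rw [mem_baseChange_iff]
  constructor
  · rintro ⟨⟨a, ha, hax⟩, ⟨b, hb, hbx⟩⟩
    refine ⟨1 ⊗ₜ[ℝ] a + Complex.I ⊗ₜ[ℝ] b, ?_, ?_⟩
    · exact Submodule.add_mem _ (Submodule.tmul_mem_baseChange_of_mem _ ha)
        (Submodule.tmul_mem_baseChange_of_mem _ hb)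
    · rw [map_add, LinearMap.baseChange_tmul, LinearMap.baseChange_tmul, hax, hbx]
      exact (repr_eq x).symm
  · rintro ⟨y, hy, rfl⟩
    have hy' : y ∈ p.baseChange ℂ := hy
    rw [mem_baseChange_iff] at hy'
    have hy := hy'
    rw [reT_baseChange, imT_baseChange]
    exact ⟨⟨_, hy.1, rfl⟩, ⟨_, hy.2, rfl⟩⟩

lemma reT_sigmaC (x : ℂ ⊗[ℝ] V) : reT V (sigmaC V x) = reT V x := by
  induction x using TensorProduct.induction_on with
  | zero => simp
  | tmul z v => simp
  | add x y hx hy => rw [map_add, map_add, map_add, hx, hy]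

lemma imT_sigmaC (x : ℂ ⊗[ℝ] V) : imT V (sigmaC V x) = - imT V x := by
  induction x using TensorProduct.induction_on with
  | zero => simp
  | tmul z v => simp
  | add x y hx hy => rw [map_add, map_add, map_add, hx, hy]; abel

lemma sigmaC_invol (x : ℂ ⊗[ℝ] V) : sigmaC V (sigmaC V x) = x := by
  induction x using TensorProduct.induction_on with
  | zero => simp
  | tmul z v => simp
  | add x y hx hy => rw [map_add, map_add, hx, hy]

lemma sigmaC_baseChange (p : Submodule ℝ V) :
    (p.baseChange ℂ).map (sigmaC V) = p.baseChange ℂ := by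
  apply le_antisymm
  · rintro _ ⟨x, hx, rfl⟩
    have hx' : x ∈ p.baseChange ℂ := hx
    show sigmaC V x ∈ p.baseChange ℂ
    rw [mem_baseChange_iff] at hx' ⊢
    rw [reT_sigmaC, imT_sigmaC]
    exact ⟨hx'.1, neg_mem hx'.2⟩
  · intro x hx
    have hx' : x ∈ p.baseChange ℂ := hx
    refine ⟨sigmaC V x, ?_, sigmaC_invol x⟩
    show sigmaC V x ∈ p.baseChange ℂ
    rw [mem_baseChange_iff] at hx' ⊢
    rw [reT_sigmaC, imT_sigmaC]
    exact ⟨hx'.1, neg_mem hx'.2⟩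

lemma sigmaC_natural (f : V →ₗ[ℝ] V') (x : ℂ ⊗[ℝ] V) :
    f.baseChange ℂ (sigmaC V x) = sigmaC V' (f.baseChange ℂ x) := by
  induction x using TensorProduct.induction_on with
  | zero => simp
  | tmul z v => simp
  | add x y hx hy => rw [map_add, map_add, map_add, map_add, hx, hy]

lemma map_map_sigma (f : V →ₗ[ℝ] V') (T : Submodule ℂ (ℂ ⊗[ℝ] V)) :
    (T.map (sigmaC V)).map (f.baseChange ℂ) = (T.map (f.baseChange ℂ)).map (sigmaC V') := by
  ext x
  constructor
  · rintro ⟨_, ⟨y, hy, rfl⟩, rfl⟩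
    exact ⟨f.baseChange ℂ y, ⟨y, hy, rfl⟩, (sigmaC_natural f y).symm⟩
  · rintro ⟨_, ⟨y, hy, rfl⟩, rfl⟩
    exact ⟨sigmaC V y, ⟨y, hy, rfl⟩, sigmaC_natural f y⟩

end Plumbing


section Abstract

variable {U : Type*} [AddCommGroup U] [Module ℂ U]

/-- Abstract mixed Hodge structure data on a complex vector space with conjugation `s`. -/
structure MHSData (s : U →ₛₗ[starRingEnd ℂ] U) (Wc : ℤ → Submodule ℂ U)
    (F : ℤ → Submodule ℂ U) where
  mono : Monotone Wc
  invol : ∀ x, s (s x) = x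
  sW : ∀ n, (Wc n).map s = Wc n
  Fanti : ∀ ⦃p q : ℤ⦄, p ≤ q → F q ≤ F p
  aW : ℤ
  haW : ∀ n ≤ aW, Wc n = ⊥
  bW : ℤ
  hbW : ∀ n, bW ≤ n → Wc n = ⊤
  aF : ℤ
  haF : ∀ p ≤ aF, F p = ⊤
  bF : ℤ
  hbF : ∀ p, bF ≤ p → F p = ⊥
  H1 : ∀ n p : ℤ,
    ((F p ⊓ Wc n) ⊔ Wc (n-1)) ⊓ (((F (n - p + 1) ⊓ Wc n).map s) ⊔ Wc (n-1)) = Wc (n-1)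
  H2 : ∀ n p : ℤ,
    (F p ⊓ Wc n) ⊔ ((F (n - p + 1) ⊓ Wc n).map s) ⊔ Wc (n-1) = Wc n

/-- correction part of the Deligne splitting -/
def SCs (s : U →ₛₗ[starRingEnd ℂ] U) (Wc : ℤ → Submodule ℂ U) (F : ℤ → Submodule ℂ U)
    (q n : ℤ) : Submodule ℂ U :=
  ⨆ k : ℕ, ((F (q - 1 - k)).map s ⊓ Wc (n - 2 - k))

def RRs (s : U →ₛₗ[starRingEnd ℂ] U) (Wc : ℤ → Submodule ℂ U) (F : ℤ → Submodule ℂ U)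
    (q n : ℤ) : Submodule ℂ U :=
  ((F q).map s ⊓ Wc n) ⊔ SCs s Wc F q n

/-- The Deligne bigrading `I^{p,q}`. -/
def Idel (s : U →ₛₗ[starRingEnd ℂ] U) (Wc : ℤ → Submodule ℂ U) (F : ℤ → Submodule ℂ U)
    (p q : ℤ) : Submodule ℂ U :=
  F p ⊓ Wc (p + q) ⊓ RRs s Wc F q (p + q)

namespace MHSData

variable {s : U →ₛₗ[starRingEnd ℂ] U} {Wc F : ℤ → Submodule ℂ U}

lemma inj (h : MHSData s Wc F) : Function.Injective s := fun a b hab => by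
  rw [← h.invol a, hab, h.invol]

lemma mem_map_s (h : MHSData s Wc F) {S : Submodule ℂ U} {x : U} :
    x ∈ S.map s ↔ s x ∈ S := by
  constructor
  · rintro ⟨y, hy, rfl⟩
    rw [h.invol]; exact hy
  · intro hx; exact ⟨s x, hx, h.invol x⟩

lemma map_s_inf (h : MHSData s Wc F) (S T : Submodule ℂ U) :
    (S ⊓ T).map s = S.map s ⊓ T.map s :=
  Submodule.map_inf s h.inj

lemma map_s_map_s (h : MHSData s Wc F) (S : Submodule ℂ U) : (S.map s).map s = S := by
  ext x
  rw [h.mem_map_s, h.mem_map_s, h.invol]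

lemma map_s_FW (h : MHSData s Wc F) (b m : ℤ) :
    (F b ⊓ Wc m).map s = (F b).map s ⊓ Wc m := by
  rw [h.map_s_inf, h.sW]

lemma SC_le (h : MHSData s Wc F) (q n : ℤ) : SCs s Wc F q n ≤ Wc (n - 2) :=
  iSup_le fun k => inf_le_right.trans (h.mono (by omega))

lemma Idel_le_F (p q : ℤ) : Idel s Wc F p q ≤ F p := inf_le_left.trans inf_le_left
lemma Idel_le_W (p q : ℤ) : Idel s Wc F p q ≤ Wc (p + q) := inf_le_left.trans inf_le_right
lemma Idel_le_RR (p q : ℤ) : Idel s Wc F p q ≤ RRs s Wc F q (p + q) := inf_le_right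

lemma RR_le_sups (h : MHSData s Wc F) (p q n m : ℤ) (hn : p + q = n) (hm : m ≤ n - 1) :
    RRs s Wc F q n ≤ (F (m - p + 1)).map s ⊔ Wc (m - 1) := by
  apply sup_le
  · exact (inf_le_left.trans (Submodule.map_mono (h.Fanti (by omega)))).trans le_sup_left
  · apply iSup_le; intro k
    by_cases hk : m ≤ n - 2 - (k : ℤ)
    · exact (inf_le_left.trans (Submodule.map_mono (h.Fanti (by omega)))).trans le_sup_left
    · exact (inf_le_right.trans (h.mono (by omega))).trans le_sup_right

lemma surj' (h : MHSData s Wc F) (p q n : ℤ) (hn : p + q = n) (t : ℕ) :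
    ∀ m : ℤ, m ≤ n - 1 → m ≤ h.aW + t →
      Wc m ≤ (F p ⊓ Wc (n-1)) ⊔ (((F q).map s ⊓ Wc (n-1)) ⊔ SCs s Wc F q n) := by
  induction t with
  | zero =>
    intro m h1 h2
    rw [h.haW m (by simpa using h2)]
    exact bot_le
  | succ t ih =>
    intro m h1 h2
    by_cases hm : m ≤ h.aW + t
    · exact ih m h1 hm
    rw [← h.H2 m p]
    refine sup_le (sup_le ?_ ?_) ?_
    · exact (inf_le_inf_left _ (h.mono (by omega))).trans le_sup_left
    · by_cases hm1 : m = n - 1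
      · have e1 : m - p + 1 = q := by omega
        rw [e1, h.map_s_FW, hm1]
        exact le_sup_left.trans le_sup_right
      · have hk : ((n - m - 2).toNat : ℤ) = n - m - 2 := Int.toNat_of_nonneg (by omega)
        have e1 : q - 1 - ((n - m - 2).toNat : ℤ) = m - p + 1 := by omega
        have e2 : n - 2 - ((n - m - 2).toNat : ℤ) = m := by omega
        rw [h.map_s_FW]
        refine le_trans ?_ (le_sup_right.trans le_sup_right)
        refine le_trans ?_ (le_iSup (fun k : ℕ => ((F (q - 1 - k)).map s ⊓ Wc (n - 2 - k)))
          ((n - m - 2).toNat))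
        rw [e1, e2]
    · exact ih (m - 1) (by omega) (by omega)

lemma surj'' (h : MHSData s Wc F) (p q n : ℤ) (hn : p + q = n) {m : ℤ} (hm : m ≤ n - 1) :
    Wc m ≤ (F p ⊓ Wc (n-1)) ⊔ (((F q).map s ⊓ Wc (n-1)) ⊔ SCs s Wc F q n) :=
  h.surj' p q n hn (m - h.aW).toNat m hm (by omega)

lemma T1' (h : MHSData s Wc F) (p q : ℤ) :
    ((F p ⊓ Wc (p+q)) ⊔ Wc (p+q-1)) ⊓ (((F q).map s ⊓ Wc (p+q)) ⊔ Wc (p+q-1))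
      = Idel s Wc F p q ⊔ Wc (p+q-1) := by
  set n := p + q with hn
  apply le_antisymm
  · intro x hx
    obtain ⟨hx1, hx2⟩ := Submodule.mem_inf.mp hx
    obtain ⟨x₀, hx₀, r, hr, hx0r⟩ := Submodule.mem_sup.mp hx1
    obtain ⟨sy, hsy, r', hr', hsyr⟩ := Submodule.mem_sup.mp hx2
    have hw : x₀ - sy ∈ Wc (n - 1) := by
      have e : x₀ - sy = r' - r := by
        have e2 := hx0r.trans hsyr.symm
        rw [sub_eq_sub_iff_add_eq_add, e2]
        exact add_comm _ _
      rw [e]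
      exact sub_mem hr' hr
    have hw2 := h.surj'' p q n hn (le_refl (n-1)) hw
    obtain ⟨u, hu, gg, hgg, hwug⟩ := Submodule.mem_sup.mp hw2
    have hx' : x₀ - u ∈ Idel s Wc F p q := by
      refine ⟨⟨sub_mem hx₀.1 hu.1, sub_mem hx₀.2 (h.mono (by omega) hu.2)⟩, ?_⟩
      have e0 : x₀ = u + gg + sy := by
        rw [← sub_eq_iff_eq_add]; exact hwug.symm
      have e : x₀ - u = sy + gg := by rw [e0]; abel
      rw [e]
      refine add_mem (le_sup_left (α := Submodule ℂ U) ?_) ?_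
      · exact ⟨hsy.1, hsy.2⟩
      · exact (sup_le_sup (inf_le_inf_left _ (h.mono (by omega))) le_rfl) hgg
    refine Submodule.mem_sup.mpr ⟨x₀ - u, hx', u + r, add_mem hu.2 hr, ?_⟩
    rw [← hx0r]; abel
  · refine sup_le (le_inf ?_ ?_) (le_inf le_sup_right le_sup_right)
    · exact le_sup_left.trans' (le_inf (Idel_le_F p q) (Idel_le_W p q))
    · refine le_trans (Idel_le_RR p q) (sup_le ?_ ?_)
      · exact le_sup_left.trans' (inf_le_inf_left _ (h.mono (by omega)))
      · exact le_sup_right.trans' ((h.SC_le q n).trans (h.mono (by omega)))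

lemma Ibot (h : MHSData s Wc F) (p q : ℤ) : Idel s Wc F p q ⊓ Wc (p + q - 1) = ⊥ := by
  set n := p + q with hn
  have key : ∀ t : ℕ, ∀ m : ℤ, m ≤ n - 1 → m ≤ h.aW + t → Idel s Wc F p q ⊓ Wc m = ⊥ := by
    intro t
    induction t with
    | zero =>
      intro m h1 h2
      rw [h.haW m (by simpa using h2), inf_bot_eq]
    | succ t ih =>
      intro m h1 h2
      by_cases hm : m ≤ h.aW + t
      · exact ih m h1 hm
      have step : Idel s Wc F p q ⊓ Wc m ≤ Wc (m - 1) := by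
        rw [← h.H1 m p]
        refine le_inf ?_ ?_
        · refine le_sup_left.trans' (le_inf ?_ inf_le_right)
          exact inf_le_left.trans (Idel_le_F p q)
        · have e1 : Idel s Wc F p q ⊓ Wc m ≤ ((F (m - p + 1)).map s ⊔ Wc (m - 1)) ⊓ Wc m :=
            le_inf ((inf_le_left.trans (Idel_le_RR p q)).trans
              (h.RR_le_sups p q n m hn h1)) inf_le_right
          refine e1.trans ?_
          rw [h.map_s_FW,
            sup_comm ((F (m - p + 1)).map s) (Wc (m - 1)),
            sup_inf_assoc_of_le _ (h.mono (by omega : m - 1 ≤ m))]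
          exact le_of_eq (sup_comm _ _)
      have : Idel s Wc F p q ⊓ Wc m ≤ Idel s Wc F p q ⊓ Wc (m - 1) :=
        le_inf inf_le_left step
      rw [ih (m - 1) (by omega) (by omega)] at this
      exact le_bot_iff.mp this
  exact key (n - 1 - h.aW).toNat (n - 1) le_rfl (by omega)


lemma Idel_le_W' (p q n : ℤ) (hn : p + q = n) : Idel s Wc F p q ≤ Wc n := hn ▸ Idel_le_W p q

lemma Idel_le_RR' (p q n : ℤ) (hn : p + q = n) : Idel s Wc F p q ≤ RRs s Wc F q n :=
  hn ▸ Idel_le_RR p q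

lemma RR_le_s (h : MHSData s Wc F) (q n b : ℤ) (hb : b ≤ q) :
    RRs s Wc F q n ≤ ((F b).map s ⊓ Wc n) ⊔ Wc (n - 1) :=
  sup_le (le_sup_left.trans' (inf_le_inf (Submodule.map_mono (h.Fanti hb)) le_rfl))
    (le_sup_right.trans' ((h.SC_le q n).trans (h.mono (by omega))))

lemma T1'' (h : MHSData s Wc F) (p q n : ℤ) (hn : p + q = n) :
    ((F p ⊓ Wc n) ⊔ Wc (n-1)) ⊓ (((F q).map s ⊓ Wc n) ⊔ Wc (n-1))
      = Idel s Wc F p q ⊔ Wc (n-1) := by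
  subst hn
  exact h.T1' p q

lemma Ibot' (h : MHSData s Wc F) (p q n : ℤ) (hn : p + q = n) :
    Idel s Wc F p q ⊓ Wc (n - 1) = ⊥ := by
  subst hn
  exact h.Ibot p q

lemma PT (h : MHSData s Wc F) (n : ℤ) (t : ℕ) :
    ∀ p₀ : ℤ, h.bF - p₀ ≤ t →
      (F p₀ ⊓ Wc n) ⊔ Wc (n-1)
        ≤ (⨆ (p : ℤ) (_ : p₀ ≤ p), Idel s Wc F p (n - p)) ⊔ Wc (n-1) := by
  induction t with
  | zero =>
    intro p₀ hp₀
    rw [h.hbF p₀ (by omega), bot_inf_eq, bot_sup_eq]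
    exact le_sup_right
  | succ t ih =>
    intro p₀ hp₀
    by_cases hp : h.bF - p₀ ≤ t
    · exact ih p₀ hp
    refine sup_le ?_ le_sup_right
    intro x hx
    have hxw : x ∈ (F (p₀+1) ⊓ Wc n) ⊔ ((F (n - (p₀+1) + 1) ⊓ Wc n).map s) ⊔ Wc (n-1) := by
      rw [h.H2 n (p₀+1)]
      exact hx.2
    obtain ⟨ab, hab, w, hw, habw⟩ := Submodule.mem_sup.mp hxw
    obtain ⟨uu, huu, v, hv, huv⟩ := Submodule.mem_sup.mp hab
    have hv' : v ∈ ((F (n - p₀) ⊓ Wc n)).map s := by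
      have e : n - (p₀+1) + 1 = n - p₀ := by omega
      rwa [e] at hv
    have hvmem : v ∈ (F p₀ ⊓ Wc n) ⊔ Wc (n-1) := by
      refine Submodule.mem_sup.mpr ⟨x - uu,
        sub_mem ⟨hx.1, hx.2⟩ ⟨h.Fanti (by omega) huu.1, huu.2⟩, -w, neg_mem hw, ?_⟩
      have e : x = uu + v + w := by rw [huv, habw]
      rw [e]; abel
    have hv2 : v ∈ ((F (n - p₀)).map s ⊓ Wc n) ⊔ Wc (n-1) := by
      rw [h.map_s_FW] at hv'
      exact Submodule.mem_sup_left hv'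
    have hvI : v ∈ Idel s Wc F p₀ (n - p₀) ⊔ Wc (n-1) := by
      rw [← h.T1'' p₀ (n - p₀) n (by omega)]
      exact Submodule.mem_inf.mpr ⟨hvmem, hv2⟩
    obtain ⟨ξ, hξ, w2, hw2, hvxi⟩ := Submodule.mem_sup.mp hvI
    have hmem1 : uu + w ∈ (⨆ (p : ℤ) (_ : p₀ ≤ p), Idel s Wc F p (n - p)) ⊔ Wc (n-1) := by
      have hs : uu + w ∈ (F (p₀+1) ⊓ Wc n) ⊔ Wc (n-1) :=
        Submodule.mem_sup.mpr ⟨uu, huu, w, hw, rfl⟩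
      have h2 := ih (p₀+1) (by omega) hs
      refine (sup_le_sup ?_ (le_refl (Wc (n-1)))) h2
      exact iSup_le fun p' => iSup_le fun hp' =>
        le_iSup₂ (f := fun (p : ℤ) (_ : p₀ ≤ p) => Idel s Wc F p (n - p)) p' (by omega)
    have hmem2 : ξ ∈ (⨆ (p : ℤ) (_ : p₀ ≤ p), Idel s Wc F p (n - p)) ⊔ Wc (n-1) :=
      Submodule.mem_sup_left
        ((le_iSup₂ (f := fun (p : ℤ) (_ : p₀ ≤ p) => Idel s Wc F p (n - p)) p₀ le_rfl) hξ)
    have e : x = ξ + (w2 + (uu + w)) := by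
      rw [← habw, ← huv, ← hvxi]; abel
    rw [e]
    exact add_mem hmem2 (add_mem (Submodule.mem_sup_right hw2) hmem1)

lemma levelEq (h : MHSData s Wc F) (n p₀ : ℤ) :
    (F p₀ ⊓ Wc n) ⊔ Wc (n-1)
      = (⨆ (p : ℤ) (_ : p₀ ≤ p), Idel s Wc F p (n - p)) ⊔ Wc (n-1) := by
  apply le_antisymm
  · exact h.PT n (h.bF - p₀).toNat p₀ (by omega)
  · refine sup_le (iSup_le fun p => iSup_le fun hp => le_sup_left.trans' (le_inf ?_ ?_))
      le_sup_right
    · exact (Idel_le_F p (n - p)).trans (h.Fanti hp)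
    · exact Idel_le_W' p (n - p) n (by omega)

lemma FW_eq_aux (h : MHSData s Wc F) (t : ℕ) :
    ∀ n : ℤ, n ≤ h.aW + t → ∀ p₀ : ℤ,
      F p₀ ⊓ Wc n
        = ⨆ (pq : ℤ × ℤ) (_ : p₀ ≤ pq.1 ∧ pq.1 + pq.2 ≤ n), Idel s Wc F pq.1 pq.2 := by
  induction t with
  | zero =>
    intro n hn p₀
    have hbot : Wc n = ⊥ := h.haW n (by simpa using hn)
    rw [hbot, inf_bot_eq]
    symm
    rw [← le_bot_iff]
    refine iSup_le fun pq => iSup_le fun hpq => ?_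
    have := (Idel_le_W (s := s) (F := F) pq.1 pq.2).trans (h.mono hpq.2)
    rwa [hbot] at this
  | succ t ih =>
    intro n hn p₀
    by_cases hn' : n ≤ h.aW + t
    · exact ih n hn' p₀
    apply le_antisymm
    · intro x hx
      have hx1 : x ∈ (⨆ (p : ℤ) (_ : p₀ ≤ p), Idel s Wc F p (n - p)) ⊔ Wc (n-1) := by
        rw [← h.levelEq n p₀]
        exact Submodule.mem_sup_left hx
      obtain ⟨ξ, hξ, w, hw, hxw⟩ := Submodule.mem_sup.mp hx1
      have hleF : (⨆ (p : ℤ) (_ : p₀ ≤ p), Idel s Wc F p (n - p)) ≤ F p₀ :=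
        iSup_le fun p => iSup_le fun hp => (Idel_le_F p (n - p)).trans (h.Fanti hp)
      have hξF : ξ ∈ F p₀ := hleF hξ
      have hwF : w ∈ F p₀ ⊓ Wc (n-1) := by
        refine ⟨?_, hw⟩
        have e : w = x - ξ := by rw [← hxw]; abel
        rw [e]
        exact sub_mem hx.1 hξF
      have hwRec : w ∈ ⨆ (pq : ℤ × ℤ) (_ : p₀ ≤ pq.1 ∧ pq.1 + pq.2 ≤ n - 1),
          Idel s Wc F pq.1 pq.2 := by
        rw [← ih (n-1) (by omega) p₀]
        exact hwF
      have hwRec' : w ∈ ⨆ (pq : ℤ × ℤ) (_ : p₀ ≤ pq.1 ∧ pq.1 + pq.2 ≤ n),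
          Idel s Wc F pq.1 pq.2 := by
        have hle : (⨆ (pq : ℤ × ℤ) (_ : p₀ ≤ pq.1 ∧ pq.1 + pq.2 ≤ n - 1),
            Idel s Wc F pq.1 pq.2) ≤ ⨆ (pq : ℤ × ℤ) (_ : p₀ ≤ pq.1 ∧ pq.1 + pq.2 ≤ n),
            Idel s Wc F pq.1 pq.2 :=
          iSup_le fun pq => iSup_le fun hpq =>
            le_iSup₂ (f := fun (pq : ℤ × ℤ) (_ : p₀ ≤ pq.1 ∧ pq.1 + pq.2 ≤ n) =>
              Idel s Wc F pq.1 pq.2) pq ⟨hpq.1, by omega⟩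
        exact hle hwRec
      have hξ' : ξ ∈ ⨆ (pq : ℤ × ℤ) (_ : p₀ ≤ pq.1 ∧ pq.1 + pq.2 ≤ n),
          Idel s Wc F pq.1 pq.2 := by
        have hle : (⨆ (p : ℤ) (_ : p₀ ≤ p), Idel s Wc F p (n - p))
            ≤ ⨆ (pq : ℤ × ℤ) (_ : p₀ ≤ pq.1 ∧ pq.1 + pq.2 ≤ n), Idel s Wc F pq.1 pq.2 :=
          iSup_le fun p => iSup_le fun hp =>
            le_iSup₂ (f := fun (pq : ℤ × ℤ) (_ : p₀ ≤ pq.1 ∧ pq.1 + pq.2 ≤ n) =>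
              Idel s Wc F pq.1 pq.2) (p, n - p) ⟨hp, by omega⟩
        exact hle hξ
      rw [← hxw]
      exact add_mem hξ' hwRec'
    · refine iSup_le fun pq => iSup_le fun hpq => le_inf ?_ ?_
      · exact (Idel_le_F pq.1 pq.2).trans (h.Fanti hpq.1)
      · exact (Idel_le_W pq.1 pq.2).trans (h.mono hpq.2)

lemma FW_eq (h : MHSData s Wc F) (p₀ n : ℤ) :
    F p₀ ⊓ Wc n
      = ⨆ (pq : ℤ × ℤ) (_ : p₀ ≤ pq.1 ∧ pq.1 + pq.2 ≤ n), Idel s Wc F pq.1 pq.2 :=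
  h.FW_eq_aux (n - h.aW).toNat n (by omega) p₀

lemma Wtotal (h : MHSData s Wc F) (n : ℤ) :
    Wc n = ⨆ (pq : ℤ × ℤ) (_ : pq.1 + pq.2 ≤ n), Idel s Wc F pq.1 pq.2 := by
  apply le_antisymm
  · have e : Wc n = F h.aF ⊓ Wc n := by rw [h.haF h.aF le_rfl, top_inf_eq]
    rw [e, h.FW_eq h.aF n]
    exact iSup_le fun pq => iSup_le fun hpq =>
      le_iSup₂ (f := fun (pq : ℤ × ℤ) (_ : pq.1 + pq.2 ≤ n) => Idel s Wc F pq.1 pq.2)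
        pq hpq.2
  · exact iSup_le fun pq => iSup_le fun hpq => (Idel_le_W pq.1 pq.2).trans (h.mono hpq)

lemma UPI (h : MHSData s Wc F) (n p : ℤ) :
    Idel s Wc F p (n - p)
        ⊓ ((⨆ (p' : ℤ) (_ : p' ≠ p), Idel s Wc F p' (n - p')) ⊔ Wc (n-1)) = ⊥ := by
  rw [eq_bot_iff]
  intro x hx
  obtain ⟨hxI, hxR⟩ := Submodule.mem_inf.mp hx
  obtain ⟨ξ, hξ, w', hw', hxw⟩ := Submodule.mem_sup.mp hxR
  have hsplit : ξ ∈ (⨆ (p' : ℤ) (_ : p < p'), Idel s Wc F p' (n - p'))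
      ⊔ (⨆ (p' : ℤ) (_ : p' < p), Idel s Wc F p' (n - p')) := by
    have hle : (⨆ (p' : ℤ) (_ : p' ≠ p), Idel s Wc F p' (n - p'))
        ≤ (⨆ (p' : ℤ) (_ : p < p'), Idel s Wc F p' (n - p'))
          ⊔ (⨆ (p' : ℤ) (_ : p' < p), Idel s Wc F p' (n - p')) := by
      refine iSup_le fun p' => iSup_le fun hne => ?_
      rcases lt_or_gt_of_ne hne with hlt | hgt
      · exact le_sup_right.trans'
          (le_iSup₂ (f := fun (p' : ℤ) (_ : p' < p) => Idel s Wc F p' (n - p')) p' hlt)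
      · exact le_sup_left.trans'
          (le_iSup₂ (f := fun (p' : ℤ) (_ : p < p') => Idel s Wc F p' (n - p')) p' hgt)
    exact hle hξ
  obtain ⟨uξ, huξ, vξ, hvξ, hξuv⟩ := Submodule.mem_sup.mp hsplit
  have hu1 : uξ ∈ F (p+1) ⊓ Wc n := by
    have hle : (⨆ (p' : ℤ) (_ : p < p'), Idel s Wc F p' (n - p')) ≤ F (p+1) ⊓ Wc n := by
      refine iSup_le fun p' => iSup_le fun hp' => le_inf ?_ ?_
      · exact (Idel_le_F p' (n - p')).trans (h.Fanti (by omega))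
      · exact Idel_le_W' p' (n - p') n (by omega)
    exact hle huξ
  have hv1 : vξ ∈ ((F (n - p + 1)).map s ⊓ Wc n) ⊔ Wc (n - 1) := by
    have hle : (⨆ (p' : ℤ) (_ : p' < p), Idel s Wc F p' (n - p'))
        ≤ ((F (n - p + 1)).map s ⊓ Wc n) ⊔ Wc (n - 1) := by
      refine iSup_le fun p' => iSup_le fun hp' => ?_
      exact (Idel_le_RR' p' (n - p') n (by omega)).trans
        (h.RR_le_s (n - p') n (n - p + 1) (by omega))
    exact hle hvξ
  have hxRR : x ∈ ((F (n - p)).map s ⊓ Wc n) ⊔ Wc (n - 1) :=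
    ((Idel_le_RR' p (n - p) n (by omega)).trans (h.RR_le_s (n - p) n (n - p) le_rfl)) hxI
  have hu0 : uξ ∈ Wc (n-1) := by
    have hH := h.H1 n (p+1)
    have e : n - (p+1) + 1 = n - p := by omega
    rw [e] at hH
    rw [← hH]
    refine Submodule.mem_inf.mpr ⟨Submodule.mem_sup_left hu1, ?_⟩
    rw [h.map_s_FW]
    have euξ : uξ = x - vξ - w' := by
      rw [← hxw, ← hξuv]; abel
    rw [euξ]
    refine sub_mem (sub_mem hxRR ?_) (Submodule.mem_sup_right hw')
    exact (sup_le_sup (inf_le_inf (Submodule.map_mono (h.Fanti (by omega))) le_rfl)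
      le_rfl) hv1
  have hxlow : x ∈ Wc (n - 1) := by
    have hH := h.H1 n p
    rw [← hH]
    refine Submodule.mem_inf.mpr ⟨Submodule.mem_sup_left
      ⟨(Idel_le_F p (n - p)) hxI, (Idel_le_W' p (n - p) n (by omega)) hxI⟩, ?_⟩
    rw [h.map_s_FW]
    have ex : x = vξ + (uξ + w') := by rw [← hxw, ← hξuv]; abel
    rw [ex]
    exact add_mem hv1 (Submodule.mem_sup_right
      (add_mem hu0 hw'))
  have := h.Ibot' p (n - p) n (by omega)
  rw [← this]
  exact Submodule.mem_inf.mpr ⟨hxI, hxlow⟩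



/-- Membership in a conditional supremum via finitely supported decompositions. -/
lemma mem_biSup_iff {ι : Type*} (G : ι → Submodule ℂ U) (P : ι → Prop) (x : U) :
    x ∈ (⨆ (i : ι) (_ : P i), G i)
      ↔ ∃ c : ι →₀ U, (∀ i, c i ∈ G i) ∧ (∀ i, ¬ P i → c i = 0)
          ∧ (c.sum fun _ m => m) = x := by
  classical
  constructor
  · intro hx
    rw [iSup_subtype'] at hx
    obtain ⟨g, hg, hgs⟩ := (Submodule.mem_iSup_iff_exists_finsupp _ x).mp hx
    refine ⟨g.embDomain (Function.Embedding.subtype P), ?_, ?_, ?_⟩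
    · intro i
      by_cases hP : P i
      · have : (Function.Embedding.subtype P) ⟨i, hP⟩ = i := rfl
        rw [← this, Finsupp.embDomain_apply_self]
        exact hg ⟨i, hP⟩
      · rw [Finsupp.embDomain_notin_range]
        · exact zero_mem _
        · rintro ⟨⟨j, hj⟩, rfl⟩
          exact hP hj
    · intro i hP
      rw [Finsupp.embDomain_notin_range]
      rintro ⟨⟨j, hj⟩, rfl⟩
      exact hP hj
    · rw [Finsupp.sum_embDomain]
      exact hgs
  · rintro ⟨c, h1, h2, rfl⟩
    rw [Finsupp.sum]
    apply Submodule.sum_mem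
    intro i hi
    have hPi : P i := by
      by_contra hP
      exact (Finsupp.mem_support_iff.mp hi) (h2 i hP)
    exact (le_iSup₂ (f := fun (i : ι) (_ : P i) => G i) i hPi) (h1 i)

lemma Ind_aux (h : MHSData s Wc F) (t : ℕ) :
    ∀ c : (ℤ × ℤ) →₀ U, (∀ pq, c pq ∈ Idel s Wc F pq.1 pq.2)
      → (∀ pq : ℤ × ℤ, h.aW + t < pq.1 + pq.2 → c pq = 0)
      → (c.sum fun _ m => m) = 0 → c = 0 := by
  induction t with
  | zero =>
    intro c h1 h2 h3
    ext pq
    rw [Finsupp.coe_zero, Pi.zero_apply]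
    by_cases hs : h.aW < pq.1 + pq.2
    · exact h2 pq (by simpa using hs)
    · have hle : Idel s Wc F pq.1 pq.2 ≤ ⊥ :=
        (Idel_le_W (s := s) (F := F) pq.1 pq.2).trans (le_of_eq (h.haW (pq.1+pq.2) (by omega)))
      simpa using hle (h1 pq)
  | succ t ih =>
    intro c h1 h2 h3
    set n : ℤ := h.aW + t + 1 with hn
    have hlevel : ∀ pq : ℤ × ℤ, pq.1 + pq.2 = n → c pq = 0 := by
      intro pq0 hpq0
      have h3' : ∑ pq ∈ c.support, c pq = 0 := h3
      have hsum : c pq0 = - ∑ pq ∈ c.support.erase pq0, c pq := by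
        by_cases hmem : pq0 ∈ c.support
        · rw [← Finset.add_sum_erase _ _ hmem] at h3'
          exact eq_neg_of_add_eq_zero_left h3'
        · rw [Finset.erase_eq_of_notMem hmem, h3', neg_zero]
          exact Finsupp.notMem_support_iff.mp hmem
      have hmem2 : (∑ pq ∈ c.support.erase pq0, c pq)
          ∈ (⨆ (p' : ℤ) (_ : p' ≠ pq0.1), Idel s Wc F p' (n - p')) ⊔ Wc (n-1) := by
        apply Submodule.sum_mem
        intro pq hpq
        rcases lt_trichotomy (pq.1 + pq.2) n with hlt | heq | hgt
        · exact Submodule.mem_sup_right ((h.mono (by omega)) ((Idel_le_W pq.1 pq.2) (h1 pq)))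
        · have hne : pq.1 ≠ pq0.1 := by
            intro hE
            apply Finset.ne_of_mem_erase hpq
            have h22 : pq.2 = pq0.2 := by omega
            exact Prod.ext hE h22
          have e : pq.2 = n - pq.1 := by omega
          refine Submodule.mem_sup_left
            ((le_iSup₂ (f := fun (p' : ℤ) (_ : p' ≠ pq0.1) => Idel s Wc F p' (n - p'))
              pq.1 hne) ?_)
          rw [← e]
          exact h1 pq
        · rw [h2 pq (by push_cast; omega)]
          exact zero_mem _
      have hc0 : c pq0 ∈ Idel s Wc F pq0.1 (n - pq0.1)
          ⊓ ((⨆ (p' : ℤ) (_ : p' ≠ pq0.1), Idel s Wc F p' (n - p')) ⊔ Wc (n-1)) := by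
        constructor
        · have e : n - pq0.1 = pq0.2 := by omega
          rw [e]
          exact h1 pq0
        · rw [hsum]
          exact neg_mem hmem2
      rw [h.UPI n pq0.1] at hc0
      simpa using hc0
    refine ih c h1 ?_ h3
    intro pq hpq
    by_cases he : pq.1 + pq.2 = n
    · exact hlevel pq he
    · exact h2 pq (by push_cast; omega)

lemma Idel_bot_of_high (h : MHSData s Wc F) (p q : ℤ) (hpq : h.bW + 1 ≤ p + q) :
    Idel s Wc F p q = ⊥ := by
  have hb := h.Ibot p q
  rwa [h.hbW (p+q-1) (by omega), inf_top_eq] at hb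

lemma Ind (h : MHSData s Wc F) (c : (ℤ × ℤ) →₀ U)
    (h1 : ∀ pq, c pq ∈ Idel s Wc F pq.1 pq.2) (h3 : (c.sum fun _ m => m) = 0) : c = 0 := by
  refine h.Ind_aux (h.bW + 1 - h.aW).toNat c h1 ?_ h3
  intro pq hpq
  have htn := Int.self_le_toNat (h.bW + 1 - h.aW)
  have : Idel s Wc F pq.1 pq.2 = ⊥ := h.Idel_bot_of_high pq.1 pq.2 (by omega)
  have h4 := h1 pq
  rw [this] at h4
  simpa using h4

section Two

variable {U' : Type*} [AddCommGroup U'] [Module ℂ U']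
variable {s' : U' →ₛₗ[starRingEnd ℂ] U'} {Wc' F' : ℤ → Submodule ℂ U'}
variable {g : U →ₗ[ℂ] U'}

lemma map_comm_le (hgs : ∀ x, g (s x) = s' (g x)) (S : Submodule ℂ U) :
    (S.map s).map g ≤ (S.map g).map s' := by
  rintro _ ⟨_, ⟨y, hy, rfl⟩, rfl⟩
  exact ⟨g y, ⟨y, hy, rfl⟩, (hgs y).symm⟩

lemma Idel_map (hgs : ∀ x, g (s x) = s' (g x)) (hgW : ∀ n, (Wc n).map g ≤ Wc' n)
    (hgF : ∀ p, (F p).map g ≤ F' p) (p q : ℤ) :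
    (Idel s Wc F p q).map g ≤ Idel s' Wc' F' p q := by
  have hA : ((F p ⊓ Wc (p+q)).map g) ≤ F' p ⊓ Wc' (p+q) :=
    le_trans (Submodule.map_inf_le g) (inf_le_inf (hgF p) (hgW _))
  have hB : (RRs s Wc F q (p+q)).map g ≤ RRs s' Wc' F' q (p+q) := by
    rw [RRs, RRs, Submodule.map_sup]
    refine sup_le (le_sup_left.trans' ?_) (le_sup_right.trans' ?_)
    · exact le_trans (Submodule.map_inf_le g)
        (inf_le_inf (le_trans (map_comm_le hgs _) (Submodule.map_mono (hgF q))) (hgW _))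
    · rw [SCs, SCs, Submodule.map_iSup]
      refine iSup_le fun k => le_trans (le_trans (Submodule.map_inf_le g)
        (inf_le_inf (le_trans (map_comm_le hgs _) (Submodule.map_mono (hgF _)))
          (hgW _))) (le_iSup (fun k : ℕ => (F' (q - 1 - (k:ℤ))).map s' ⊓ Wc' (p + q - 2 - (k:ℤ))) k)
  exact le_trans (Submodule.map_inf_le g) (inf_le_inf hA hB)

lemma ker_s_stable (hgs : ∀ x, g (s x) = s' (g x)) {x : U} (hx : x ∈ LinearMap.ker g) :
    s x ∈ LinearMap.ker g := by
  rw [LinearMap.mem_ker] at hx ⊢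
  rw [hgs, hx, map_zero]

lemma WN_eq (h : MHSData s Wc F) (h' : MHSData s' Wc' F')
    (hgs : ∀ x, g (s x) = s' (g x)) (hgW : ∀ n, (Wc n).map g ≤ Wc' n)
    (hgF : ∀ p, (F p).map g ≤ F' p) (n : ℤ) :
    Wc n ⊓ LinearMap.ker g
      = ⨆ (pq : ℤ × ℤ) (_ : pq.1 + pq.2 ≤ n),
          (Idel s Wc F pq.1 pq.2 ⊓ LinearMap.ker g) := by
  apply le_antisymm
  · intro x hx
    have hx1 : x ∈ ⨆ (pq : ℤ × ℤ) (_ : pq.1 + pq.2 ≤ n), Idel s Wc F pq.1 pq.2 := by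
      rw [← h.Wtotal n]; exact hx.1
    rw [mem_biSup_iff] at hx1
    obtain ⟨c, hc1, hc2, hc3⟩ := hx1
    have hkill : ∀ pq, g (c pq) = 0 := by
      set c' : (ℤ × ℤ) →₀ U' := c.mapRange g (map_zero g) with hc'def
      have hc'1 : ∀ pq, c' pq ∈ Idel s' Wc' F' pq.1 pq.2 := fun pq =>
        (Idel_map hgs hgW hgF pq.1 pq.2) ⟨c pq, hc1 pq, rfl⟩
      have hc'3 : (c'.sum fun _ m => m) = 0 := by
        rw [hc'def, Finsupp.sum_mapRange_index (fun _ => rfl)]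
        have : (c.sum fun _ m => g m) = g (c.sum fun _ m => m) :=
          (map_finsuppSum g c fun _ m => m).symm
        rw [this, hc3]
        exact LinearMap.mem_ker.mp hx.2
      have hz := h'.Ind c' hc'1 hc'3
      intro pq
      have : c' pq = 0 := by rw [hz]; rfl
      simpa [hc'def, Finsupp.mapRange_apply] using this
    rw [mem_biSup_iff]
    exact ⟨c, fun pq => ⟨hc1 pq, LinearMap.mem_ker.mpr (hkill pq)⟩, hc2, hc3⟩
  · exact iSup_le fun pq => iSup_le fun hpq =>
      inf_le_inf ((Idel_le_W pq.1 pq.2).trans (h.mono hpq)) le_rfl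

lemma J4w (h : MHSData s Wc F) (h' : MHSData s' Wc' F')
    (hgs : ∀ x, g (s x) = s' (g x)) (hgW : ∀ n, (Wc n).map g ≤ Wc' n)
    (hgF : ∀ p, (F p).map g ≤ F' p) (p q n : ℤ) (hn : p + q = n) :
    ((Idel s Wc F p q ⊓ LinearMap.ker g).map s)
      ≤ (F q ⊓ (Wc n ⊓ LinearMap.ker g)) ⊔ (Wc (n-1) ⊓ LinearMap.ker g) := by
  rintro _ ⟨x, hx, rfl⟩
  obtain ⟨hxI, hxN⟩ := hx
  have hzN : s x ∈ LinearMap.ker g := ker_s_stable hgs hxN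
  have hzW : s x ∈ Wc n := by
    rw [← h.sW n]
    exact Submodule.mem_map_of_mem ((Idel_le_W' p q n hn) hxI)
  have hzJ : s x ∈ ⨆ (pq : ℤ × ℤ) (_ : pq.1 + pq.2 ≤ n),
      (Idel s Wc F pq.1 pq.2 ⊓ LinearMap.ker g) := by
    rw [← WN_eq h h' hgs hgW hgF n]
    exact ⟨hzW, hzN⟩
  rw [mem_biSup_iff] at hzJ
  obtain ⟨cJ, hcJ1, hcJ2, hcJ3⟩ := hzJ
  have hxRR := (Idel_le_RR' p q n hn) hxI
  obtain ⟨sy, hsy, cc, hcc, hsycc⟩ := Submodule.mem_sup.mp hxRR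
  have hy'F : s sy ∈ F q := h.mem_map_s.mp hsy.1
  have hy'W : s sy ∈ Wc n := by rw [← h.sW n]; exact Submodule.mem_map_of_mem hsy.2
  have hsccW : s cc ∈ Wc (n-1) := by
    refine h.mono (by omega : n - 2 ≤ n - 1) ?_
    rw [← h.sW (n-2)]
    exact Submodule.mem_map_of_mem ((h.SC_le q n) hcc)
  have hyd : s sy ∈ ⨆ (pq : ℤ × ℤ) (_ : q ≤ pq.1 ∧ pq.1 + pq.2 ≤ n),
      Idel s Wc F pq.1 pq.2 := by
    rw [← h.FW_eq q n]
    exact ⟨hy'F, hy'W⟩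
  rw [mem_biSup_iff] at hyd
  obtain ⟨cY, hcY1, hcY2, hcY3⟩ := hyd
  have hcl : s cc ∈ ⨆ (pq : ℤ × ℤ) (_ : pq.1 + pq.2 ≤ n - 1), Idel s Wc F pq.1 pq.2 := by
    rw [← h.Wtotal (n-1)]
    exact hsccW
  rw [mem_biSup_iff] at hcl
  obtain ⟨cL, hcL1, hcL2, hcL3⟩ := hcl
  have hzsum : s x = s sy + s cc := by
    rw [← map_add, hsycc]
  have hΔ : cJ - (cY + cL) = 0 := by
    refine h.Ind _ (fun pq => ?_) ?_
    · rw [Finsupp.sub_apply, Finsupp.add_apply]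
      exact sub_mem (hcJ1 pq).1 (add_mem (hcY1 pq) (hcL1 pq))
    · rw [Finsupp.sum_sub_index (fun _ _ _ => rfl),
        Finsupp.sum_add_index' (fun _ => rfl) (fun _ _ _ => rfl), hcJ3, hcY3, hcL3, hzsum]
      abel
  have hpt : ∀ pq, cJ pq = cY pq + cL pq := by
    intro pq
    have h0 : (cJ - (cY + cL)) pq = 0 := by rw [hΔ]; rfl
    rw [Finsupp.sub_apply, Finsupp.add_apply] at h0
    exact sub_eq_zero.mp h0
  rw [← hcJ3, Finsupp.sum]
  apply Submodule.sum_mem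
  intro pq hpq
  by_cases hlev : pq.1 + pq.2 = n
  · have hcL0 : cL pq = 0 := hcL2 pq (by omega)
    have hJY : cJ pq = cY pq := by rw [hpt pq, hcL0, add_zero]
    by_cases hY0 : cY pq = 0
    · rw [hJY, hY0]; exact zero_mem _
    · have hq : q ≤ pq.1 := by
        by_contra hq'
        exact hY0 (hcY2 pq (fun hc => hq' hc.1))
      refine Submodule.mem_sup_left ⟨?_, ?_, ?_⟩
      · exact (h.Fanti hq) ((Idel_le_F pq.1 pq.2) (hcJ1 pq).1)
      · exact (Idel_le_W' pq.1 pq.2 n hlev) (hcJ1 pq).1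
      · exact (hcJ1 pq).2
  · by_cases hhi : pq.1 + pq.2 ≤ n
    · refine Submodule.mem_sup_right ⟨?_, (hcJ1 pq).2⟩
      exact (h.mono (by omega)) ((Idel_le_W pq.1 pq.2) (hcJ1 pq).1)
    · rw [hcJ2 pq (by omega)]
      exact zero_mem _

theorem kernel_conditions (h : MHSData s Wc F) (h' : MHSData s' Wc' F')
    (hgs : ∀ x, g (s x) = s' (g x)) (hgW : ∀ n, (Wc n).map g ≤ Wc' n)
    (hgF : ∀ p, (F p).map g ≤ F' p) (n p : ℤ) :
    (((F p ⊓ (Wc n ⊓ LinearMap.ker g)) ⊔ (Wc (n-1) ⊓ LinearMap.ker g))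
        ⊓ (((F (n - p + 1) ⊓ (Wc n ⊓ LinearMap.ker g)).map s)
            ⊔ (Wc (n-1) ⊓ LinearMap.ker g))
      = Wc (n-1) ⊓ LinearMap.ker g)
    ∧ ((F p ⊓ (Wc n ⊓ LinearMap.ker g)) ⊔ ((F (n - p + 1) ⊓ (Wc n ⊓ LinearMap.ker g)).map s)
        ⊔ (Wc (n-1) ⊓ LinearMap.ker g)
      = Wc n ⊓ LinearMap.ker g) := by
  set N := LinearMap.ker g with hN
  have hsWN : ∀ m : ℤ, ∀ y, y ∈ Wc m ⊓ N → s y ∈ Wc m ⊓ N := by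
    intro m y hy
    constructor
    · rw [← h.sW m]; exact Submodule.mem_map_of_mem hy.1
    · exact ker_s_stable hgs hy.2
  constructor
  · apply le_antisymm
    · refine le_inf ?_ ?_
      · have hf1 : (F p ⊓ (Wc n ⊓ N)) ⊔ (Wc (n-1) ⊓ N) ≤ (F p ⊓ Wc n) ⊔ Wc (n-1) :=
          sup_le_sup (inf_le_inf le_rfl inf_le_left) inf_le_left
        have hf2 : ((F (n - p + 1) ⊓ (Wc n ⊓ N)).map s) ⊔ (Wc (n-1) ⊓ N)
            ≤ ((F (n - p + 1) ⊓ Wc n).map s) ⊔ Wc (n-1) :=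
          sup_le_sup (Submodule.map_mono (inf_le_inf le_rfl inf_le_left)) inf_le_left
        refine le_trans (inf_le_inf hf1 hf2) ?_
        rw [h.H1 n p]
      · refine inf_le_left.trans (sup_le ?_ inf_le_right)
        exact inf_le_right.trans inf_le_right
    · exact le_inf le_sup_right le_sup_right
  · apply le_antisymm
    · refine sup_le (sup_le inf_le_right ?_) (inf_le_inf (h.mono (by omega)) le_rfl)
      rintro _ ⟨y, hy, rfl⟩
      exact hsWN n y hy.2
    · refine le_trans (le_of_eq (WN_eq h h' hgs hgW hgF n)) ?_
      refine iSup_le fun pq => iSup_le fun hpq => ?_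
      by_cases hsum : pq.1 + pq.2 = n
      · by_cases hp1 : p ≤ pq.1
        · refine le_sup_left.trans' (le_sup_left.trans' (le_inf ?_ ?_))
          · exact inf_le_left.trans ((Idel_le_F pq.1 pq.2).trans (h.Fanti hp1))
          · exact inf_le_inf (Idel_le_W' pq.1 pq.2 n hsum) le_rfl
        · intro x hx
          have h2 : s x ∈ (F pq.2 ⊓ (Wc n ⊓ N)) ⊔ (Wc (n-1) ⊓ N) :=
            (J4w h h' hgs hgW hgF pq.1 pq.2 n hsum) ⟨x, hx, rfl⟩
          obtain ⟨y1, hy1, y2, hy2, hys⟩ := Submodule.mem_sup.mp h2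
          have hxe : x = s y1 + s y2 := by
            rw [← map_add, hys, h.invol]
          rw [hxe]
          refine add_mem ?_ ?_
          · refine Submodule.mem_sup_left (Submodule.mem_sup_right ?_)
            exact ⟨y1, ⟨h.Fanti (by omega) hy1.1, hy1.2⟩, rfl⟩
          · exact Submodule.mem_sup_right (hsWN (n-1) y2 hy2)
      · refine le_sup_right.trans' ?_
        exact inf_le_inf ((Idel_le_W pq.1 pq.2).trans (h.mono (by omega))) le_rfl

end Two

end MHSData
end Abstract

/-- kernels. Let `f` be a morphism of mixed Hodge structures
`(V, W, F) → (V', W', F')` and `K := ker f`. Identifying `K_ℂ` with `ker f_ℂ ⊆ V_ℂ` via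
the (injective) base change of the inclusion `K ↪ V`, the induced filtrations
`W^K_n := W_n ∩ K` and `F^p_K := F^p ∩ K_ℂ` (expressed as pullbacks along the inclusion and
its base change) define a mixed Hodge structure on `K`. -/
theorem mhs_kernel (V V' : Type*)
    [AddCommGroup V] [Module ℝ V] [FiniteDimensional ℝ V]
    [AddCommGroup V'] [Module ℝ V'] [FiniteDimensional ℝ V']
    (W : ℤ → Submodule ℝ V) (F : ℤ → Submodule ℂ (ℂ ⊗[ℝ] V))
    (W' : ℤ → Submodule ℝ V') (F' : ℤ → Submodule ℂ (ℂ ⊗[ℝ] V'))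
    (hWF : IsMixedHodgeStructure V W F) (hWF' : IsMixedHodgeStructure V' W' F')
    (f : V →ₗ[ℝ] V')
    (hfW : ∀ n : ℤ, (W n).map f ≤ W' n)
    (hfF : ∀ p : ℤ, (F p).map (f.baseChange ℂ) ≤ F' p) :
    IsMixedHodgeStructure ↥(LinearMap.ker f)
      (fun n => (W n).comap (LinearMap.ker f).subtype)
      (fun p => (F p).comap ((LinearMap.ker f).subtype.baseChange ℂ)) := by
  classical
  obtain ⟨hW1, ⟨aW, haW⟩, ⟨bW, hbW⟩, hF4, ⟨aF, haF⟩, ⟨bF, hbF⟩, hH⟩ := hWF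
  obtain ⟨hW1', ⟨aW', haW'⟩, ⟨bW', hbW'⟩, hF4', ⟨aF', haF'⟩, ⟨bF', hbF'⟩, hH'⟩ := hWF'
  have hFanti : ∀ ⦃p q : ℤ⦄, p ≤ q → F q ≤ F p := fun p q hpq =>
    Int.le_induction (motive := fun r _ => F r ≤ F p) le_rfl (fun n _ ih => (hF4 n).trans ih) q hpq
  have hFanti' : ∀ ⦃p q : ℤ⦄, p ≤ q → F' q ≤ F' p := fun p q hpq =>
    Int.le_induction (motive := fun r _ => F' r ≤ F' p) le_rfl (fun n _ ih => (hF4' n).trans ih) q hpq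
  have hD : MHSData (sigmaC V) (fun n => (W n).baseChange ℂ) F :=
    { mono := fun m n hmn => baseChange_mono (hW1 hmn)
      invol := sigmaC_invol
      sW := fun n => sigmaC_baseChange (W n)
      Fanti := hFanti
      aW := aW
      haW := fun n hn => by rw [haW n hn, Submodule.baseChange_bot]
      bW := bW
      hbW := fun n hn => by rw [hbW n hn, Submodule.baseChange_top]
      aF := aF
      haF := haF
      bF := bF
      hbF := fun p hp => hbF p hp
      H1 := fun n p => (hH n p).1
      H2 := fun n p => (hH n p).2 }
  have hD' : MHSData (sigmaC V') (fun n => (W' n).baseChange ℂ) F' :=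
    { mono := fun m n hmn => baseChange_mono (hW1' hmn)
      invol := sigmaC_invol
      sW := fun n => sigmaC_baseChange (W' n)
      Fanti := hFanti'
      aW := aW'
      haW := fun n hn => by rw [haW' n hn, Submodule.baseChange_bot]
      bW := bW'
      hbW := fun n hn => by rw [hbW' n hn, Submodule.baseChange_top]
      aF := aF'
      haF := haF'
      bF := bF'
      hbF := fun p hp => hbF' p hp
      H1 := fun n p => (hH' n p).1
      H2 := fun n p => (hH' n p).2 }
  have hgs : ∀ x, (f.baseChange ℂ) (sigmaC V x) = sigmaC V' (f.baseChange ℂ x) :=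
    sigmaC_natural f
  have hgW : ∀ n : ℤ, ((W n).baseChange ℂ).map (f.baseChange ℂ) ≤ (W' n).baseChange ℂ := by
    intro n
    rw [← baseChange_map]
    exact baseChange_mono (hfW n)
  set K := LinearMap.ker f with hK
  have hkerb : LinearMap.ker (K.subtype.baseChange ℂ) = ⊥ := by
    rw [ker_baseChange, Submodule.ker_subtype, Submodule.baseChange_bot]
  have hinj : Function.Injective (K.subtype.baseChange ℂ) := by
    rw [← LinearMap.ker_eq_bot]
    exact hkerb
  have hrange : LinearMap.range (K.subtype.baseChange ℂ) = LinearMap.ker (f.baseChange ℂ) := by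
    rw [ker_baseChange f]
    calc LinearMap.range (K.subtype.baseChange ℂ)
        = ((⊤ : Submodule ℝ K).baseChange ℂ).map (K.subtype.baseChange ℂ) := by
          rw [Submodule.baseChange_top, Submodule.map_top]
      _ = ((⊤ : Submodule ℝ K).map K.subtype).baseChange ℂ := (baseChange_map K.subtype ⊤).symm
      _ = K.baseChange ℂ := by rw [Submodule.map_top, Submodule.range_subtype]
  set N := LinearMap.ker (f.baseChange ℂ) with hNdef
  have hpush : ∀ q : Submodule ℂ (ℂ ⊗[ℝ] V),
      (q.comap (K.subtype.baseChange ℂ)).map (K.subtype.baseChange ℂ) = N ⊓ q := by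
    intro q
    rw [Submodule.map_comap_eq, hrange]
  have hpushW : ∀ m : ℤ,
      (((W m).comap K.subtype).baseChange ℂ).map (K.subtype.baseChange ℂ)
        = N ⊓ (W m).baseChange ℂ := by
    intro m
    rw [← baseChange_map, Submodule.map_comap_subtype, baseChange_inf, ← ker_baseChange]
  have hmapinf : ∀ X Y : Submodule ℂ (ℂ ⊗[ℝ] ↥K),
      (X ⊓ Y).map (K.subtype.baseChange ℂ)
        = X.map (K.subtype.baseChange ℂ) ⊓ Y.map (K.subtype.baseChange ℂ) :=
    fun X Y => Submodule.map_inf _ hinj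
  have e1 : ∀ A B : Submodule ℂ (ℂ ⊗[ℝ] V), (N ⊓ A) ⊓ (N ⊓ B) = A ⊓ (B ⊓ N) := by
    intro A B
    ext x
    simp only [Submodule.mem_inf]
    tauto
  refine ⟨?_, ⟨aW, ?_⟩, ⟨bW, ?_⟩, ?_, ⟨aF, ?_⟩, ⟨bF, ?_⟩, ?_⟩
  · intro m n hmn
    exact Submodule.comap_mono (hW1 hmn)
  · intro n hn
    show (W n).comap K.subtype = ⊥
    rw [haW n hn, Submodule.comap_bot, Submodule.ker_subtype]
  · intro n hn
    show (W n).comap K.subtype = ⊤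
    rw [hbW n hn, Submodule.comap_top]
  · intro p
    exact Submodule.comap_mono (hF4 p)
  · intro p hp
    show (F p).comap (K.subtype.baseChange ℂ) = ⊤
    rw [haF p hp, Submodule.comap_top]
  · intro p hp
    show (F p).comap (K.subtype.baseChange ℂ) = ⊥
    rw [hbF p hp, Submodule.comap_bot]
    exact hkerb
  · intro n p
    have hker := MHSData.kernel_conditions hD hD' hgs hgW hfF n p
    have goal1 : (((F p).comap (K.subtype.baseChange ℂ) ⊓ ((W n).comap K.subtype).baseChange ℂ)
          ⊔ ((W (n-1)).comap K.subtype).baseChange ℂ)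
        ⊓ ((((F (n-p+1)).comap (K.subtype.baseChange ℂ)
              ⊓ ((W n).comap K.subtype).baseChange ℂ).map (sigmaC ↥K))
          ⊔ ((W (n-1)).comap K.subtype).baseChange ℂ)
        = ((W (n-1)).comap K.subtype).baseChange ℂ := by
      apply Submodule.map_injective_of_injective hinj
      rw [hmapinf, Submodule.map_sup, Submodule.map_sup, hmapinf,
        map_map_sigma K.subtype, hmapinf, hpush, hpush, hpushW, hpushW,
        e1, e1, inf_comm N ((W (n-1)).baseChange ℂ)]
      exact hker.1
    have goal2 : ((F p).comap (K.subtype.baseChange ℂ) ⊓ ((W n).comap K.subtype).baseChange ℂ)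
        ⊔ (((F (n-p+1)).comap (K.subtype.baseChange ℂ)
              ⊓ ((W n).comap K.subtype).baseChange ℂ).map (sigmaC ↥K))
        ⊔ ((W (n-1)).comap K.subtype).baseChange ℂ
        = ((W n).comap K.subtype).baseChange ℂ := by
      apply Submodule.map_injective_of_injective hinj
      rw [Submodule.map_sup, Submodule.map_sup, hmapinf,
        map_map_sigma K.subtype, hmapinf, hpush, hpush, hpushW, hpushW,
        e1, e1, inf_comm N ((W (n-1)).baseChange ℂ), inf_comm N ((W n).baseChange ℂ)]
      exact hker.2
    exact ⟨goal1, goal2⟩
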